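/- arXiv:1807.03904 — 3 statements merged into one kernel-verified Lean document; each statement's English description precedes it below -/
import Mathlib

section
/- Let K be a compact topological group with Haar probability measure, let G and Γ be topological groups, and let ι_G : K → G and ι_Γ : K → Γ be continuous group homomorphisms. Fix a continuous function χ : K → ℂ and a scalar d ∈ ℂ. Let ω be a continuous unitary representation of Γ on a complex Hilbert space E, with Q the χ-averaged operator of the K-representation k ↦ ω(ι_Γ(k)), and set Φ(γ) := Q ∘ ω(γ) ∘ Q. For each ℓ ∈ ℕ let ρ_ℓ be a continuous unitary representation of G on a complex Hilbert space H_ℓ, with P_ℓ the χ-averaged operator of k ↦ ρ_ℓ(ι_G(k)), and set Φ_ℓ(g) := P_ℓ ∘ ρ_ℓ(g) ∘ P_ℓ. Suppose given bounded linear maps R_ℓ : H_ℓ → E satisfying R_ℓ ∘ ρ_ℓ(ι_G(k)) = ω(ι_Γ(k)) ∘ R_ℓ for all k ∈ K, arbitrary maps D_ℓ : Γ → G, a vector f ∈ E with Q f = f, and vectors f̃_ℓ ∈ H_ℓ with P_ℓ f̃_ℓ = f̃_ℓ and R_ℓ f̃_ℓ = f for all ℓ. If S ⊆ Γ is a set such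 that sup_{γ ∈ S} ‖R_ℓ(ρ_ℓ(D_ℓ(γ)) f̃_ℓ) − ω(γ) f‖ → 0 as ℓ → ∞, then sup_{γ ∈ S} ‖R_ℓ(Φ_ℓ(D_ℓ(γ)) f̃_ℓ) − Φ(γ) f‖ → 0 as ℓ → ∞. -/
open MeasureTheory Filter

/-- The `χ`-averaged operator of a family of operators `π` on `H`:
`v ↦ d • ∫_K conj (χ k) • (π k v) dμ(k)`. -/
noncomputable def avgOp {K : Type*} [MeasurableSpace K]
    {H : Type*} [NormedAddCommGroup H] [NormedSpace ℂ H]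
    (μ : Measure K) (χ : K → ℂ) (d : ℂ) (π : K → H →L[ℂ] H) : H → H :=
  fun v => d • ∫ k, (starRingEnd ℂ) (χ k) • (π k) v ∂μ

set_option linter.unusedSectionVars false

section Aux
variable {K : Type*} [TopologicalSpace K] [CompactSpace K]
    [MeasurableSpace K] [OpensMeasurableSpace K]
    (μ : Measure K) [IsFiniteMeasure μ]
    (χ : K → ℂ) (hχ : Continuous χ) (d : ℂ)
    {H : Type*} [NormedAddCommGroup H] [NormedSpace ℂ H] [CompleteSpace H]
    (π : K → H →L[ℂ] H) (hπ : ∀ v, Continuous fun k => π k v)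


include hχ hπ

theorem avg_integrable (v : H) :
    Integrable (fun k => (starRingEnd ℂ) (χ k) • (π k) v) μ :=
  (((continuous_star.comp hχ).smul (hπ v))).integrable_of_hasCompactSupport
    (HasCompactSupport.of_compactSpace _)

theorem avg_sub (u v : H) :
    avgOp μ χ d π u - avgOp μ χ d π v = avgOp μ χ d π (u - v) := by
  unfold avgOp
  rw [← smul_sub, ← integral_sub (avg_integrable μ χ hχ π hπ u) (avg_integrable μ χ hχ π hπ v)]
  congr 1
  apply integral_congr_ae
  filter_upwards with k
  rw [← smul_sub, ← map_sub]

theorem avg_norm (hπn : ∀ k w, ‖π k w‖ = ‖w‖) (v : H) :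
    ‖avgOp μ χ d π v‖ ≤ (‖d‖ * ∫ k, ‖χ k‖ ∂μ) * ‖v‖ := by
  unfold avgOp
  rw [norm_smul, mul_assoc, ← integral_mul_const]
  refine mul_le_mul_of_nonneg_left ?_ (norm_nonneg d)
  refine (norm_integral_le_integral_norm _).trans ?_
  apply integral_mono_of_nonneg (by filter_upwards with k using norm_nonneg _)
  · exact (hχ.norm.mul continuous_const).integrable_of_hasCompactSupport
      (HasCompactSupport.of_compactSpace _)
  · filter_upwards with k
    rw [norm_smul, RCLike.norm_conj, hπn]

theorem avg_comm {E : Type*} [NormedAddCommGroup E] [NormedSpace ℂ E] [CompleteSpace E]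
    (σ : K → E →L[ℂ] E) (R : H →L[ℂ] E)
    (hR : ∀ k v, R (π k v) = σ k (R v)) (v : H) :
    R (avgOp μ χ d π v) = avgOp μ χ d σ (R v) := by
  unfold avgOp
  rw [_root_.map_smul, ← R.integral_comp_comm (avg_integrable μ χ hχ π hπ v)]
  congr 1
  apply integral_congr_ae
  filter_upwards with k
  rw [_root_.map_smul, hR]

end Aux

/-- Abstract core of the approximation theorem: if the matrix coefficients of the contracting
sequence `ρ ℓ ∘ D ℓ` converge (uniformly on `S`) to those of `ω`, then the corresponding
spherical-type functions `Φℓ = Pℓ ∘ ρℓ ∘ Pℓ` converge to `Φ = Q ∘ ω ∘ Q`. -/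
theorem stmt0 {K G Γ : Type*}
    [Group K] [TopologicalSpace K] [IsTopologicalGroup K] [CompactSpace K]
    [MeasurableSpace K] [BorelSpace K]
    [Group G] [TopologicalSpace G] [IsTopologicalGroup G]
    [Group Γ] [TopologicalSpace Γ] [IsTopologicalGroup Γ]
    (μ : Measure K) [μ.IsHaarMeasure] [IsProbabilityMeasure μ]
    (ιG : K →* G) (hιG : Continuous ιG)
    (ιΓ : K →* Γ) (hιΓ : Continuous ιΓ)
    (χ : K → ℂ) (hχ : Continuous χ) (d : ℂ)
    {E : Type*} [NormedAddCommGroup E] [InnerProductSpace ℂ E] [CompleteSpace E]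
    (ω : Γ →* unitary (E →L[ℂ] E))
    (hω : ∀ v : E, Continuous fun γ => (ω γ : E →L[ℂ] E) v)
    (Q : E → E) (hQ : Q = avgOp μ χ d fun k => (ω (ιΓ k) : E →L[ℂ] E))
    (Φ : Γ → E → E) (hΦ : ∀ γ v, Φ γ v = Q ((ω γ : E →L[ℂ] E) (Q v)))
    (H : ℕ → Type*) [∀ ℓ, NormedAddCommGroup (H ℓ)] [∀ ℓ, InnerProductSpace ℂ (H ℓ)]
    [∀ ℓ, CompleteSpace (H ℓ)]
    (ρ : ∀ ℓ : ℕ, G →* unitary (H ℓ →L[ℂ] H ℓ))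
    (hρ : ∀ (ℓ : ℕ) (v : H ℓ), Continuous fun g => (ρ ℓ g : H ℓ →L[ℂ] H ℓ) v)
    (P : ∀ ℓ : ℕ, H ℓ → H ℓ)
    (hP : ∀ ℓ : ℕ, P ℓ = avgOp μ χ d fun k => (ρ ℓ (ιG k) : H ℓ →L[ℂ] H ℓ))
    (Φℓ : ∀ ℓ : ℕ, G → H ℓ → H ℓ)
    (hΦℓ : ∀ (ℓ : ℕ) (g : G) (v : H ℓ), Φℓ ℓ g v = P ℓ ((ρ ℓ g : H ℓ →L[ℂ] H ℓ) (P ℓ v)))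
    (R : ∀ ℓ : ℕ, H ℓ →L[ℂ] E)
    (hR : ∀ (ℓ : ℕ) (k : K) (v : H ℓ),
      R ℓ ((ρ ℓ (ιG k) : H ℓ →L[ℂ] H ℓ) v) = (ω (ιΓ k) : E →L[ℂ] E) (R ℓ v))
    (D : ℕ → Γ → G)
    (f : E) (hf : Q f = f)
    (ft : ∀ ℓ : ℕ, H ℓ)
    (hft : ∀ ℓ : ℕ, P ℓ (ft ℓ) = ft ℓ)
    (hftR : ∀ ℓ : ℕ, R ℓ (ft ℓ) = f)
    (S : Set Γ)
    (hconv : Tendsto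
      (fun ℓ : ℕ => ⨆ γ : S, ‖R ℓ ((ρ ℓ (D ℓ γ) : H ℓ →L[ℂ] H ℓ) (ft ℓ)) - (ω γ : E →L[ℂ] E) f‖)
      atTop (nhds 0)) :
    Tendsto
      (fun ℓ : ℕ => ⨆ γ : S, ‖R ℓ (Φℓ ℓ (D ℓ γ) (ft ℓ)) - Φ γ f‖)
      atTop (nhds 0) := by
  
  classical
  set C : ℝ := ‖d‖ * ∫ k, ‖χ k‖ ∂μ with hC
  have hC0 : 0 ≤ C := mul_nonneg (norm_nonneg d) (integral_nonneg fun k => norm_nonneg _)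
  have hωn : ∀ (γ : Γ) (v : E), ‖(ω γ : E →L[ℂ] E) v‖ = ‖v‖ := fun γ v => Unitary.norm_map _ v
  have hρn : ∀ (ℓ : ℕ) (g : G) (v : H ℓ), ‖(ρ ℓ g : H ℓ →L[ℂ] H ℓ) v‖ = ‖v‖ :=
    fun ℓ g v => Unitary.norm_map _ v
  have hωcont : ∀ v : E, Continuous fun k : K => (ω (ιΓ k) : E →L[ℂ] E) v :=
    fun v => (hω v).comp hιΓ
  have hρcont : ∀ (ℓ : ℕ) (v : H ℓ), Continuous fun k : K => (ρ ℓ (ιG k) : H ℓ →L[ℂ] H ℓ) v :=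
    fun ℓ v => (hρ ℓ v).comp hιG
  -- key identity and bound
  have key : ∀ (ℓ : ℕ) (γ : Γ),
      ‖R ℓ (Φℓ ℓ (D ℓ γ) (ft ℓ)) - Φ γ f‖ ≤
        C * ‖R ℓ ((ρ ℓ (D ℓ γ) : H ℓ →L[ℂ] H ℓ) (ft ℓ)) - (ω γ : E →L[ℂ] E) f‖ := by
    intro ℓ γ
    have h1 : R ℓ (Φℓ ℓ (D ℓ γ) (ft ℓ)) =
        Q (R ℓ ((ρ ℓ (D ℓ γ) : H ℓ →L[ℂ] H ℓ) (ft ℓ))) := by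
      rw [hΦℓ, hft, hP ℓ, hQ]
      exact avg_comm μ χ hχ d _ (hρcont ℓ) _ (R ℓ) (hR ℓ) _
    rw [h1, hΦ, hf, hQ, avg_sub μ χ hχ d (fun k => (ω (ιΓ k) : E →L[ℂ] E)) hωcont
      (R ℓ ((ρ ℓ (D ℓ γ) : H ℓ →L[ℂ] H ℓ) (ft ℓ))) ((ω γ : E →L[ℂ] E) f)]
    exact avg_norm μ χ hχ d (fun k => (ω (ιΓ k) : E →L[ℂ] E)) hωcont (fun k => hωn (ιΓ k)) _
  -- boundedness of the old family
  have bddold : ∀ ℓ : ℕ, BddAbove (Set.range fun γ : S =>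
      ‖R ℓ ((ρ ℓ (D ℓ γ) : H ℓ →L[ℂ] H ℓ) (ft ℓ)) - (ω γ : E →L[ℂ] E) f‖) := by
    intro ℓ
    refine ⟨‖R ℓ‖ * ‖ft ℓ‖ + ‖f‖, ?_⟩
    rintro x ⟨γ, rfl⟩
    calc ‖R ℓ ((ρ ℓ (D ℓ γ) : H ℓ →L[ℂ] H ℓ) (ft ℓ)) - (ω γ : E →L[ℂ] E) f‖
        ≤ ‖R ℓ ((ρ ℓ (D ℓ γ) : H ℓ →L[ℂ] H ℓ) (ft ℓ))‖ + ‖(ω γ : E →L[ℂ] E) f‖ :=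
          norm_sub_le _ _
      _ ≤ ‖R ℓ‖ * ‖ft ℓ‖ + ‖f‖ := by
          rw [hωn]
          gcongr
          exact ((R ℓ).le_opNorm _).trans (by rw [hρn])
  -- squeeze
  have hnn : ∀ ℓ : ℕ, 0 ≤ ⨆ γ : S, ‖R ℓ (Φℓ ℓ (D ℓ γ) (ft ℓ)) - Φ γ f‖ :=
    fun ℓ => Real.iSup_nonneg fun γ => norm_nonneg _
  have hbound : ∀ ℓ : ℕ, (⨆ γ : S, ‖R ℓ (Φℓ ℓ (D ℓ γ) (ft ℓ)) - Φ γ f‖) ≤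
      C * ⨆ γ : S, ‖R ℓ ((ρ ℓ (D ℓ γ) : H ℓ →L[ℂ] H ℓ) (ft ℓ)) - (ω γ : E →L[ℂ] E) f‖ := by
    intro ℓ
    rcases isEmpty_or_nonempty S with hS | hS
    · rw [Real.iSup_of_isEmpty, Real.iSup_of_isEmpty, mul_zero]
    · refine ciSup_le fun γ => (key ℓ γ).trans ?_
      exact mul_le_mul_of_nonneg_left (le_ciSup (bddold ℓ) γ) hC0
  have hlim : Tendsto (fun ℓ : ℕ => C *
      ⨆ γ : S, ‖R ℓ ((ρ ℓ (D ℓ γ) : H ℓ →L[ℂ] H ℓ) (ft ℓ)) - (ω γ : E →L[ℂ] E) f‖)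
      atTop (nhds 0) := by
    simpa using hconv.const_mul C
  exact squeeze_zero hnn hbound hlim
end

section
/- Let K be a compact topological group with Haar probability measure and let π be a continuous unitary representation of K on a complex Hilbert space H. Let V ⊆ H be a nonzero finite-dimensional π-invariant subspace which is irreducible, i.e. the only π-invariant subspaces of V are 0 and V. Let χ : K → ℂ be χ(k) := trace(π(k)|_V), let d := dim V, and let P be the χ-averaged operator of π; assume that the range of P equals V (multiplicity one). Let (W_ℓ)_{ℓ ∈ ℕ} be an increasing sequence (W_ℓ ⊆ W_{ℓ+1}) of finite-dimensional π-invariant subspaces of H whose union ⋃_ℓ W_ℓ is dense in H. Then there exists ℓ₀ ∈ ℕ such that V ⊆ W_ℓ for all ℓ ≥ ℓ₀. -/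
open MeasureTheory

/-- If `V` is a nonzero finite-dimensional irreducible invariant subspace realizing the isotypic
projection `P` with multiplicity one (range `P = V`), and `(W ℓ)` is an increasing sequence of
finite-dimensional invariant subspaces with dense union, then `V ⊆ W ℓ` for all large `ℓ`. -/
theorem stmt2 {K : Type*} [Group K] [TopologicalSpace K] [IsTopologicalGroup K]
    [CompactSpace K] [MeasurableSpace K] [BorelSpace K]
    (μ : Measure K) [μ.IsHaarMeasure] [IsProbabilityMeasure μ]
    {H : Type*} [NormedAddCommGroup H] [InnerProductSpace ℂ H] [CompleteSpace H]
    (π : K →* unitary (H →L[ℂ] H))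
    (hπ : ∀ v : H, Continuous fun k => (π k : H →L[ℂ] H) v)
    (V : Submodule ℂ H) [FiniteDimensional ℂ V] (hVne : V ≠ ⊥)
    (hVinv : ∀ (k : K), ∀ v ∈ V, (π k : H →L[ℂ] H) v ∈ V)
    (hVirred : ∀ U : Submodule ℂ H, U ≤ V →
      (∀ (k : K), ∀ v ∈ U, (π k : H →L[ℂ] H) v ∈ U) → U = ⊥ ∨ U = V)
    (χ : K → ℂ)
    (hχ : ∀ k : K, χ k =
      LinearMap.trace ℂ V (((π k : H →L[ℂ] H) : H →ₗ[ℂ] H).restrict (hVinv k)))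
    (d : ℂ) (hd : d = (Module.finrank ℂ V : ℂ))
    (P : H → H) (hP : P = avgOp μ χ d fun k => (π k : H →L[ℂ] H))
    (hrange : Set.range P = (V : Set H))
    (W : ℕ → Submodule ℂ H)
    (hWmono : ∀ ℓ : ℕ, W ℓ ≤ W (ℓ + 1))
    (hWfd : ∀ ℓ : ℕ, FiniteDimensional ℂ (W ℓ))
    (hWinv : ∀ (ℓ : ℕ) (k : K), ∀ v ∈ W ℓ, (π k : H →L[ℂ] H) v ∈ W ℓ)
    (hWdense : Dense (⋃ ℓ : ℕ, (W ℓ : Set H))) :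
    ∃ ℓ₀ : ℕ, ∀ ℓ ≥ ℓ₀, V ≤ W ℓ := by
  classical
  obtain ⟨v0, hv0V, hv0⟩ := Submodule.exists_mem_ne_zero_of_ne_bot hVne
  haveI : Nontrivial H := nontrivial_of_ne v0 0 hv0
  -- unitary operators have norm 1
  have hπnorm : ∀ k : K, ‖(π k : H →L[ℂ] H)‖ = 1 := fun k => CStarRing.norm_of_mem_unitary (π k).2
  have hπle : ∀ (k : K) (v : H), ‖(π k : H →L[ℂ] H) v‖ ≤ ‖v‖ := fun k v => by
    calc ‖(π k : H →L[ℂ] H) v‖ ≤ ‖(π k : H →L[ℂ] H)‖ * ‖v‖ :=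
          (π k : H →L[ℂ] H).le_opNorm v
      _ = ‖v‖ := by rw [hπnorm k, one_mul]
  -- χ is continuous
  have hχcont : Continuous χ := by
    let b := Module.finBasis ℂ V
    have htr : ∀ k : K, χ k = ∑ i, b.repr
        ((((π k : H →L[ℂ] H) : H →ₗ[ℂ] H).restrict (hVinv k)) (b i)) i := by
      intro k
      rw [hχ k, LinearMap.trace_eq_matrix_trace ℂ b, Matrix.trace]
      simp [Matrix.diag, LinearMap.toMatrix_apply]
    rw [funext htr]
    refine continuous_finset_sum _ (fun i _ => ?_)
    have hcoord : Continuous fun v : V => b.repr v i :=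
      (LinearMap.toContinuousLinearMap (b.coord i)).continuous
    have hvec : Continuous fun k : K =>
        ((((π k : H →L[ℂ] H) : H →ₗ[ℂ] H).restrict (hVinv k)) (b i) : V) := by
      have : ∀ k : K, (((π k : H →L[ℂ] H) : H →ₗ[ℂ] H).restrict (hVinv k)) (b i)
          = ⟨(π k : H →L[ℂ] H) (b i : H), hVinv k _ (b i).2⟩ := fun k => rfl
      rw [funext this]
      exact Continuous.subtype_mk (hπ (b i : H)) _
    exact hcoord.comp hvec
  -- the integrand is continuous, hence integrable
  have hcont : ∀ v : H, Continuous fun k => (starRingEnd ℂ) (χ k) • (π k : H →L[ℂ] H) v :=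
    fun v => ((RCLike.continuous_conj.comp hχcont).smul (hπ v))
  have hint : ∀ v : H, Integrable (fun k => (starRingEnd ℂ) (χ k) • (π k : H →L[ℂ] H) v) μ :=
    fun v => (hcont v).integrable_of_hasCompactSupport (HasCompactSupport.of_compactSpace _)
  -- bound for χ
  obtain ⟨k0, -, hC⟩ := isCompact_univ.exists_isMaxOn (Set.nonempty_of_mem (Set.mem_univ (1 : K)))
    ((continuous_norm.comp hχcont).continuousOn : ContinuousOn (fun k => ‖χ k‖) Set.univ)
  set C : ℝ := ‖χ k0‖ with hCdef
  have hC' : ∀ k : K, ‖χ k‖ ≤ C := fun k => hC (Set.mem_univ k)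
  have hC0 : 0 ≤ C := le_trans (norm_nonneg _) (hC' 1)
  -- Lipschitz-type bound for P
  have hlip : ∀ v w : H, ‖P v - P w‖ ≤ (‖d‖ * C) * ‖v - w‖ := by
    intro v w
    have hsub : P v - P w = d • ∫ k, (starRingEnd ℂ) (χ k) • (π k : H →L[ℂ] H) (v - w) ∂μ := by
      rw [hP]
      simp only [avgOp]
      rw [← smul_sub, ← integral_sub (hint v) (hint w)]
      congr 1
      refine integral_congr_ae (Filter.Eventually.of_forall fun k => ?_)
      show (starRingEnd ℂ) (χ k) • (π k : H →L[ℂ] H) v - (starRingEnd ℂ) (χ k) • (π k : H →L[ℂ] H) w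
        = (starRingEnd ℂ) (χ k) • (π k : H →L[ℂ] H) (v - w)
      rw [map_sub, smul_sub]
    rw [hsub, norm_smul]
    have hbound : ‖∫ k, (starRingEnd ℂ) (χ k) • (π k : H →L[ℂ] H) (v - w) ∂μ‖
        ≤ C * ‖v - w‖ := by
      have h1 : ‖∫ k, (starRingEnd ℂ) (χ k) • (π k : H →L[ℂ] H) (v - w) ∂μ‖
          ≤ ∫ _k, C * ‖v - w‖ ∂μ := by
        refine norm_integral_le_of_norm_le (integrable_const _)
          (Filter.Eventually.of_forall fun k => ?_)
        rw [norm_smul, RCLike.norm_conj]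
        exact mul_le_mul (hC' k) (hπle k _) (norm_nonneg _) hC0
      simpa using h1
    calc ‖d‖ * ‖∫ k, (starRingEnd ℂ) (χ k) • (π k : H →L[ℂ] H) (v - w) ∂μ‖
        ≤ ‖d‖ * (C * ‖v - w‖) := by
          exact mul_le_mul_of_nonneg_left hbound (norm_nonneg d)
      _ = (‖d‖ * C) * ‖v - w‖ := by ring
  -- P maps each W ℓ into itself
  have hPW : ∀ (ℓ : ℕ), ∀ w ∈ W ℓ, P w ∈ W ℓ := by
    intro ℓ w hw
    haveI := hWfd ℓ
    set Q : H →L[ℂ] H := (W ℓ).subtypeL.comp ((W ℓ).orthogonalProjectionOnto) with hQ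
    have hQmem : ∀ x : H, Q x ∈ W ℓ := fun x => (((W ℓ).orthogonalProjectionOnto) x).2
    have hQfix : ∀ x ∈ W ℓ, Q x = x := by
      intro x hx
      have : (W ℓ).orthogonalProjectionOnto x = ⟨x, hx⟩ :=
        Submodule.orthogonalProjectionOnto_mem_subspace_eq_self (⟨x, hx⟩ : W ℓ)
      simp [hQ, this]
    have key : Q (P w) = P w := by
      rw [hP]
      simp only [avgOp]
      rw [_root_.map_smul]
      congr 1
      rw [← ContinuousLinearMap.integral_comp_comm Q (hint w)]
      refine integral_congr_ae (Filter.Eventually.of_forall fun k => ?_)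
      exact hQfix _ ((W ℓ).smul_mem _ (hWinv ℓ k w hw))
    rw [← key]
    exact hQmem _
  -- find some ℓ with V ≤ W ℓ
  have hv0mem : v0 ∈ Set.range P := by rw [hrange]; exact hv0V
  obtain ⟨u, hu⟩ := hv0mem
  have hv0norm : 0 < ‖v0‖ := norm_pos_iff.mpr hv0
  set δ : ℝ := ‖v0‖ / (‖d‖ * C + 1) with hδdef
  have hden : 0 < ‖d‖ * C + 1 := by positivity
  have hδ : 0 < δ := div_pos hv0norm hden
  obtain ⟨w, hwmem, hwd⟩ := Metric.mem_closure_iff.mp (hWdense u) δ hδ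
  obtain ⟨ℓ, hws⟩ := Set.mem_iUnion.mp hwmem
  have hPwV : P w ∈ V := by
    have : P w ∈ (V : Set H) := hrange ▸ Set.mem_range_self w
    exact this
  have hPwW : P w ∈ W ℓ := hPW ℓ w hws
  have hPwne : P w ≠ 0 := by
    intro h0
    have h1 : ‖P u - P w‖ ≤ (‖d‖ * C) * ‖u - w‖ := hlip u w
    have h2 : ‖u - w‖ < δ := by rwa [← dist_eq_norm]
    have h3 : (‖d‖ * C) * ‖u - w‖ < (‖d‖ * C + 1) * δ := by
      calc (‖d‖ * C) * ‖u - w‖ ≤ (‖d‖ * C + 1) * ‖u - w‖ := by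
            apply mul_le_mul_of_nonneg_right (by linarith) (norm_nonneg _)
        _ < (‖d‖ * C + 1) * δ := by
            exact mul_lt_mul_of_pos_left h2 hden
    have h4 : (‖d‖ * C + 1) * δ = ‖v0‖ := by
      rw [hδdef, mul_div_cancel₀ _ (ne_of_gt hden)]
    rw [h0, sub_zero, hu] at h1
    rw [h4] at h3
    exact absurd (lt_of_le_of_lt h1 h3) (lt_irrefl _)
  -- the intersection V ⊓ W ℓ is a nonzero invariant subspace of V
  have hUinv : ∀ (k : K), ∀ x ∈ V ⊓ W ℓ, (π k : H →L[ℂ] H) x ∈ V ⊓ W ℓ :=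
    fun k x hx => ⟨hVinv k x hx.1, hWinv ℓ k x hx.2⟩
  have hUne : V ⊓ W ℓ ≠ ⊥ := by
    intro h
    have : P w ∈ (⊥ : Submodule ℂ H) := h ▸ (⟨hPwV, hPwW⟩ : P w ∈ V ⊓ W ℓ)
    exact hPwne (Submodule.mem_bot ℂ |>.mp this)
  have hVW : V ≤ W ℓ := by
    rcases hVirred (V ⊓ W ℓ) inf_le_left hUinv with h | h
    · exact absurd h hUne
    · exact le_of_eq_of_le h.symm inf_le_right
  have hmono : Monotone W := monotone_nat_of_le_succ hWmono
  exact ⟨ℓ, fun m hm => le_trans hVW (hmono hm)⟩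
end

section
/- Let n ≥ 1. For x ∈ ℝⁿ let X(x) denote the (n+1) × (n+1) real block matrix X(x) = fromBlocks 0 (−xᵀ) x 0 (a 1×1 zero block, the row −xᵀ, the column x, and an n×n zero block), and for an n×n real matrix k let ι(k) denote the (n+1) × (n+1) block matrix fromBlocks 1 0 0 k. Then: (a) for every n×n real matrix k and every x ∈ ℝⁿ, ι(k) · X(x) · ι(kᵀ) = X(k x) (where k x denotes the matrix–vector product); and (b) if k₁ and k₂ are n×n real orthogonal matrices (kᵢᵀ kᵢ = 1), then for every x₁, x₂ ∈ ℝⁿ and every real α ≠ 0, exp(α⁻¹ • X(x₁)) · ι(k₁) · exp(α⁻¹ • X(x₂)) · ι(k₂) = exp(α⁻¹ • X(x₁)) · exp(α⁻¹ • X(k₁ x₂)) · ι(k₁ k₂), where exp is the matrix exponential. -/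
open Matrix

/-- The embedding `x ↦ X(x)` of `ℝⁿ` as the complement of `so(n)` in `so(n+1)`:
`X(x) = fromBlocks 0 (−xᵀ) x 0`. -/
def Xmat {n : ℕ} (x : Fin n → ℝ) : Matrix (Fin 1 ⊕ Fin n) (Fin 1 ⊕ Fin n) ℝ :=
  Matrix.fromBlocks 0 (-(Matrix.replicateRow (Fin 1) x)) (Matrix.replicateCol (Fin 1) x) 0

/-- The embedding `ι` of `n × n` matrices as the lower-right block of `(n+1) × (n+1)` matrices:
`ι(k) = fromBlocks 1 0 0 k`. -/
def iota {n : ℕ} (k : Matrix (Fin n) (Fin n) ℝ) : Matrix (Fin 1 ⊕ Fin n) (Fin 1 ⊕ Fin n) ℝ :=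
  Matrix.fromBlocks 1 0 0 k

lemma iota_mul {n : ℕ} (k₁ k₂ : Matrix (Fin n) (Fin n) ℝ) :
    iota k₁ * iota k₂ = iota (k₁ * k₂) := by
  simp [iota, Matrix.fromBlocks_multiply]

lemma conj_Xmat {n : ℕ} (k : Matrix (Fin n) (Fin n) ℝ) (x : Fin n → ℝ) :
    iota k * Xmat x * iota kᵀ = Xmat (k.mulVec x) := by
  simp only [iota, Xmat, Matrix.fromBlocks_multiply]
  congr 1 <;> simp [Matrix.replicateCol_mulVec, Matrix.replicateRow_mulVec, Matrix.transpose_mul]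

/-- (a) `Ad(ι(k)) X(x) = X(kx)` and (b) the product identity
`D_α(k₁,x₁) D_α(k₂,x₂) = exp(x₁/α) exp(Ad(k₁)x₂/α) ι(k₁k₂)` for the contraction maps
`D_α(k,x) = exp(α⁻¹ X(x)) ι(k)` of `M(n)` to `SO(n+1)`. -/
theorem stmt9 (n : ℕ) (hn : 1 ≤ n) :
    (∀ (k : Matrix (Fin n) (Fin n) ℝ) (x : Fin n → ℝ),
      iota k * Xmat x * iota kᵀ = Xmat (k.mulVec x)) ∧
    (∀ (k₁ k₂ : Matrix (Fin n) (Fin n) ℝ), k₁ᵀ * k₁ = 1 → k₂ᵀ * k₂ = 1 →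
      ∀ (x₁ x₂ : Fin n → ℝ) (α : ℝ), α ≠ 0 →
        NormedSpace.exp (α⁻¹ • Xmat x₁) * iota k₁ *
            NormedSpace.exp (α⁻¹ • Xmat x₂) * iota k₂ =
          NormedSpace.exp (α⁻¹ • Xmat x₁) *
            NormedSpace.exp (α⁻¹ • Xmat (k₁.mulVec x₂)) * iota (k₁ * k₂)) := by
  refine ⟨conj_Xmat, ?_⟩
  intro k₁ k₂ h₁ h₂ x₁ x₂ α hα
  have h₁' : k₁ * k₁ᵀ = 1 := mul_eq_one_comm.mp h₁
  have huinv : iota k₁ * iota k₁ᵀ = 1 := by rw [iota_mul, h₁']; simp [iota]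
  have huinv' : iota k₁ᵀ * iota k₁ = 1 := by rw [iota_mul, h₁]; simp [iota]
  set u : (Matrix (Fin 1 ⊕ Fin n) (Fin 1 ⊕ Fin n) ℝ)ˣ :=
    ⟨iota k₁, iota k₁ᵀ, huinv, huinv'⟩ with hu
  have key : iota k₁ * NormedSpace.exp (α⁻¹ • Xmat x₂) * iota k₁ᵀ =
      NormedSpace.exp (α⁻¹ • Xmat (k₁.mulVec x₂)) := by
    have := Matrix.exp_units_conj u (α⁻¹ • Xmat x₂)
    have hconj : (u : Matrix (Fin 1 ⊕ Fin n) (Fin 1 ⊕ Fin n) ℝ) * (α⁻¹ • Xmat x₂) *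
        ((u⁻¹ : _ˣ) : Matrix (Fin 1 ⊕ Fin n) (Fin 1 ⊕ Fin n) ℝ) =
        α⁻¹ • Xmat (k₁.mulVec x₂) := by
      show iota k₁ * (α⁻¹ • Xmat x₂) * iota k₁ᵀ = _
      rw [Matrix.mul_smul, Matrix.smul_mul, conj_Xmat]
    rw [hconj] at this
    exact this.symm ▸ rfl
  calc NormedSpace.exp (α⁻¹ • Xmat x₁) * iota k₁ *
        NormedSpace.exp (α⁻¹ • Xmat x₂) * iota k₂
      = NormedSpace.exp (α⁻¹ • Xmat x₁) *
        (iota k₁ * NormedSpace.exp (α⁻¹ • Xmat x₂) * iota k₁ᵀ) * (iota k₁ * iota k₂) := by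
        rw [← mul_assoc, ← mul_assoc, ← mul_assoc]
        rw [mul_assoc _ (iota k₁ᵀ) (iota k₁), huinv', mul_one]
    _ = NormedSpace.exp (α⁻¹ • Xmat x₁) *
        NormedSpace.exp (α⁻¹ • Xmat (k₁.mulVec x₂)) * iota (k₁ * k₂) := by
        rw [key, iota_mul, mul_assoc]
end
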